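/- If w² is a factor of a Sturmian word of slope α and w is primitive, then |w| = q_k for some k ≥ 0 or |w| = q_{k,l} for some k ≥ 2 with 0 < l < a_k; that is, the length of w is the denominator of a convergent or semiconvergent of α. -/

import Mathlib

set_option linter.unusedSectionVars false
set_option linter.unusedVariables false


/-- The Gauss map iterates: `gaussIter α n` is the `n`-th complete quotient of `α`. -/
noncomputable def gaussIter (α : ℝ) : ℕ → ℝ :=
  fun n => (fun x : ℝ => (Int.fract x)⁻¹)^[n] α

/-- The partial quotients of the continued fraction expansion of `α`:
`α = [cfA α 0; cfA α 1, cfA α 2, …]`. -/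
noncomputable def cfA (α : ℝ) (n : ℕ) : ℤ := ⌊gaussIter α n⌋

/-- The denominators `q_k` of the convergents of `α`. -/
noncomputable def cfQ (α : ℝ) : ℕ → ℤ
  | 0 => 1
  | 1 => cfA α 1
  | (n + 2) => cfA α (n + 2) * cfQ α (n + 1) + cfQ α n

/-- The `n`-th letter of the standard Sturmian word of slope `α`: the coding of the orbit
of the point `α` under rotation by `α`, with `I_0 = [0, 1-α)` coding `0` and
`I_1 = [1-α, 1)` coding `1`. -/
noncomputable def sturmianLetter (α : ℝ) (n : ℕ) : ℕ :=
  if Int.fract (((n : ℝ) + 1) * α) < 1 - α then 0 else 1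

/-- The language `L(α)`: `w` is a factor of the (standard) Sturmian word of slope `α`.
(For irrational `α` this language is the same for every Sturmian word of slope `α`.) -/
noncomputable def InLang (α : ℝ) (w : List ℕ) : Prop :=
  ∃ i : ℕ, w = (List.range w.length).map (fun j => sturmianLetter α (i + j))

/-- A finite word is primitive if it is not a power `u^n` (with `n ≥ 2`) of a shorter word. -/
def PrimitiveWord {A : Type*} (w : List A) : Prop :=
  ¬ ∃ (u : List A) (n : ℕ), 2 ≤ n ∧ w = (List.replicate n u).flatten

/-- Numerators of convergents. -/
noncomputable def cfP (α : ℝ) : ℕ → ℤ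
  | 0 => 0
  | 1 => 1
  | (n + 2) => cfA α (n + 2) * cfP α (n + 1) + cfP α n

/-- `et α (k+1) = (-1)^k (q_k α - p_k)`; `et α 0 = 1`. -/
noncomputable def et (α : ℝ) : ℕ → ℝ
  | 0 => 1
  | (k + 1) => (-1 : ℝ)^k * ((cfQ α k : ℝ) * α - (cfP α k : ℝ))

section Basics

variable {α : ℝ}

lemma irr_fract {x : ℝ} (hx : Irrational x) : Irrational (Int.fract x) := by
  rw [Int.fract]; exact hx.sub_intCast _

lemma irr_gauss (hirr : Irrational α) (k : ℕ) : Irrational (gaussIter α k) := by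
  induction k with
  | zero => exact hirr
  | succ n ih =>
      rw [gaussIter, Function.iterate_succ_apply']
      exact (irr_fract ih).inv

lemma fract_pos_irr {x : ℝ} (hx : Irrational x) : 0 < Int.fract x :=
  lt_of_le_of_ne (Int.fract_nonneg x) (Ne.symm (irr_fract hx).ne_zero)

lemma gauss_one (h0 : 0 < α) (h1 : α < 1) : gaussIter α 1 = α⁻¹ := by
  rw [gaussIter, Function.iterate_succ_apply']
  simp [gaussIter, Int.fract_eq_self.2 ⟨le_of_lt h0, h1⟩]

lemma cfA_one_ge (h0 : 0 < α) (h2 : α < 1/2) : 2 ≤ cfA α 1 := by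
  have : (2:ℝ) ≤ α⁻¹ := by
    rw [le_inv_comm₀ (by norm_num) h0]; linarith
  rw [cfA, gauss_one h0 (by linarith)]
  exact Int.le_floor.2 (by exact_mod_cast this)

/-- recurrence for `et`, purely algebraic. -/
lemma et_rec (k : ℕ) : et α (k+2) = et α k - (cfA α (k+1) : ℝ) * et α (k+1) := by
  cases k with
  | zero =>
      show (-1:ℝ)^1 * ((cfQ α 1 : ℝ) * α - (cfP α 1 : ℝ)) = _
      have hq : cfQ α 1 = cfA α 1 := rfl
      have hp : cfP α 1 = 1 := rfl
      have h0' : et α 0 = 1 := rfl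
      have h1' : et α 1 = (-1:ℝ)^0 * ((cfQ α 0 : ℝ) * α - (cfP α 0 : ℝ)) := rfl
      have hq0 : cfQ α 0 = 1 := rfl
      have hp0 : cfP α 0 = 0 := rfl
      rw [hq, hp, h0', h1', hq0, hp0]
      push_cast; ring
  | succ n =>
      show (-1:ℝ)^(n+2) * ((cfQ α (n+2) : ℝ) * α - (cfP α (n+2) : ℝ)) = _
      have hq : cfQ α (n+2) = cfA α (n+2) * cfQ α (n+1) + cfQ α n := rfl
      have hp : cfP α (n+2) = cfA α (n+2) * cfP α (n+1) + cfP α n := rfl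
      have h1' : et α (n+1) = (-1:ℝ)^n * ((cfQ α n : ℝ) * α - (cfP α n : ℝ)) := rfl
      have h2' : et α (n+2) = (-1:ℝ)^(n+1) * ((cfQ α (n+1) : ℝ) * α - (cfP α (n+1) : ℝ)) := rfl
      rw [hq, hp, h1', h2']
      push_cast; ring

lemma et_one : et α 1 = α := by
  show (-1:ℝ)^0 * ((cfQ α 0 : ℝ) * α - (cfP α 0 : ℝ)) = α
  have hq0 : cfQ α 0 = 1 := rfl
  have hp0 : cfP α 0 = 0 := rfl
  rw [hq0, hp0]; push_cast; ring

variable (hirr : Irrational α) (h0 : 0 < α) (h2 : α < 1/2)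
include hirr h0 h2

/-- Main induction: positivity, strict decrease, and the Gauss-iterate formula. -/
lemma et_main : ∀ k : ℕ, 0 < et α (k+1) ∧ et α (k+1) < et α k ∧
    gaussIter α (k+1) = et α k / et α (k+1) := by
  intro k
  induction k with
  | zero =>
      refine ⟨?_, ?_, ?_⟩
      · rw [et_one]; exact h0
      · rw [et_one]; show α < et α 0; show α < (1:ℝ); linarith
      · rw [gauss_one h0 (by linarith), et_one]; show α⁻¹ = et α 0 / α
        show α⁻¹ = 1 / α; rw [one_div]
  | succ n ih =>
      obtain ⟨hpos, hlt, hgauss⟩ := ih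
      have hne : et α (n+1) ≠ 0 := ne_of_gt hpos
      set x := gaussIter α (n+1) with hx
      have hxirr : Irrational x := irr_gauss hirr (n+1)
      have hfr : Int.fract x = x - (cfA α (n+1) : ℝ) := by
        rw [Int.fract, cfA]
      have hfrpos : 0 < Int.fract x := fract_pos_irr hxirr
      have hfrlt : Int.fract x < 1 := Int.fract_lt_one x
      have hetx : et α (n+1) * x = et α n := by
        rw [hgauss]; field_simp
      have hkey : et α (n+2) = et α (n+1) * Int.fract x := by
        rw [et_rec, hfr]; rw [mul_sub, hetx]; ring
      have hpos2 : 0 < et α (n+2) := by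
        rw [hkey]; positivity
      refine ⟨hpos2, ?_, ?_⟩
      · rw [hkey]; nlinarith
      · rw [gaussIter, Function.iterate_succ_apply']
        show (Int.fract x)⁻¹ = _
        have hfr2 : Int.fract x = et α (n+2) / et α (n+1) := by
          rw [hkey]; field_simp
        rw [hfr2]
        rw [inv_div]

lemma et_pos (k : ℕ) : 0 < et α k := by
  cases k with
  | zero => norm_num [et]
  | succ n => exact (et_main hirr h0 h2 n).1

lemma et_lt (k : ℕ) : et α (k+1) < et α k := (et_main hirr h0 h2 k).2.1

lemma et_le_one (k : ℕ) : et α k ≤ 1 := by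
  induction k with
  | zero => norm_num [et]
  | succ n ih => exact le_of_lt (lt_of_lt_of_le (et_lt hirr h0 h2 n) ih)

lemma et_lt_one (k : ℕ) : et α (k+1) < 1 :=
  lt_of_lt_of_le (et_lt hirr h0 h2 k) (et_le_one hirr h0 h2 k)

lemma cfA_pos (k : ℕ) : 1 ≤ cfA α (k+1) := by
  have h := (et_main hirr h0 h2 k).2.2
  have hpos := (et_main hirr h0 h2 k).1
  have hlt := (et_main hirr h0 h2 k).2.1
  have hx : (1:ℝ) < gaussIter α (k+1) := by
    rw [h, lt_div_iff₀ hpos]; linarith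
  rw [cfA]
  exact Int.le_floor.2 (by exact_mod_cast le_of_lt hx)

lemma et_gt_a_mul (k : ℕ) : (cfA α (k+1) : ℝ) * et α (k+1) < et α k := by
  have := et_rec (α := α) k
  have h3 := et_pos hirr h0 h2 (k+2)
  linarith

lemma et_half (k : ℕ) : et α (k+2) < et α k / 2 := by
  have h1 := et_rec (α := α) k
  have h2' := et_lt hirr h0 h2 (k+1)
  have ha : (1:ℝ) ≤ (cfA α (k+1) : ℝ) := by exact_mod_cast cfA_pos hirr h0 h2 k
  have hp := et_pos hirr h0 h2 (k+1)
  nlinarith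

lemma et_decay (x : ℝ) (hx : 0 < x) (K₀ : ℕ) : ∃ j : ℕ, et α (K₀ + 2*j) < x := by
  have key : ∀ n : ℕ, et α (K₀ + 2*n) ≤ ((1:ℝ)/2)^n := by
    intro n
    induction n with
    | zero => simpa using et_le_one hirr h0 h2 K₀
    | succ n ih =>
        have h1 : et α (K₀ + 2*(n+1)) < et α (K₀ + 2*n) / 2 := by
          have h := et_half hirr h0 h2 (K₀ + 2*n)
          have he : K₀ + 2*(n+1) = K₀ + 2*n + 2 := by ring
          rw [he]; exact h
        have : ((1:ℝ)/2)^(n+1) = ((1:ℝ)/2)^n/2 := by ring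
        rw [this]; linarith
  obtain ⟨j, hj⟩ := exists_pow_lt_of_lt_one hx (by norm_num : (1:ℝ)/2 < 1)
  exact ⟨j, lt_of_le_of_lt (key j) hj⟩

lemma cfQ_pos : ∀ k, 1 ≤ cfQ α k := by
  intro k
  induction k using Nat.strong_induction_on with
  | _ k ih =>
    match k with
    | 0 => norm_num [cfQ]
    | 1 => exact le_trans (by norm_num) (cfA_one_ge h0 h2)
    | (n+2) =>
        have h1 := ih (n+1) (by omega)
        have h2' := ih n (by omega)
        have ha := cfA_pos hirr h0 h2 (n+1)
        show 1 ≤ cfA α (n+2) * cfQ α (n+1) + cfQ α n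
        nlinarith

lemma cfQ_lt_succ : ∀ k, cfQ α k < cfQ α (k+1) := by
  intro k
  match k with
  | 0 =>
      show cfQ α 0 < cfQ α 1
      have : cfQ α 0 = 1 := rfl
      rw [this]; show (1:ℤ) < cfA α 1
      have := cfA_one_ge h0 h2; omega
  | (n+1) =>
      show cfQ α (n+1) < cfA α (n+2) * cfQ α (n+1) + cfQ α n
      have h1 := cfQ_pos hirr h0 h2 (n+1)
      have h2' := cfQ_pos hirr h0 h2 n
      have ha := cfA_pos hirr h0 h2 (n+1)
      nlinarith

lemma cfQ_mono {j k : ℕ} (h : j ≤ k) : cfQ α j ≤ cfQ α k := by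
  induction k with
  | zero => simp_all
  | succ n ih =>
      rcases Nat.lt_or_ge j (n+1) with h' | h'
      · exact le_trans (ih (by omega)) (le_of_lt (cfQ_lt_succ hirr h0 h2 n))
      · have : j = n+1 := by omega
        subst this; rfl

/-- determinant identity. -/
lemma cf_det : ∀ k, cfP α (k+1) * cfQ α k - cfP α k * cfQ α (k+1) = (-1)^k := by
  intro k
  induction k with
  | zero => norm_num [cfP, cfQ]
  | succ n ih =>
      have hq : cfQ α (n+2) = cfA α (n+2) * cfQ α (n+1) + cfQ α n := rfl
      have hp : cfP α (n+2) = cfA α (n+2) * cfP α (n+1) + cfP α n := rfl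
      rw [hq, hp, pow_succ]
      nlinarith [ih]

lemma cfQ_rec {k : ℕ} (hk : 2 ≤ k) : cfQ α k = cfA α k * cfQ α (k-1) + cfQ α (k-2) := by
  match k, hk with
  | (n+2), _ => rfl

end Basics

section Fract

variable {α : ℝ}

lemma fract_fract_add (x y : ℝ) : Int.fract (x + y) = Int.fract (Int.fract x + Int.fract y) := by
  conv_lhs => rw [← Int.fract_add_intCast (x+y) (-⌊x⌋ - ⌊y⌋)]
  congr 1
  rw [Int.fract, Int.fract]
  push_cast; ring

lemma fract_fract_sub (x y : ℝ) : Int.fract (x - y) = Int.fract (Int.fract x - Int.fract y) := by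
  conv_lhs => rw [← Int.fract_add_intCast (x-y) (-⌊x⌋ + ⌊y⌋)]
  congr 1
  rw [Int.fract, Int.fract]
  push_cast; ring

/-- distinct integer multiples of an irrational have distinct fractional parts -/
lemma fract_ne_fract (hirr : Irrational α) {z₁ z₂ : ℤ} (hz : z₁ ≠ z₂) :
    Int.fract ((z₁:ℝ)*α) ≠ Int.fract ((z₂:ℝ)*α) := by
  intro h
  have h1 : (z₁:ℝ)*α - ⌊(z₁:ℝ)*α⌋ = (z₂:ℝ)*α - ⌊(z₂:ℝ)*α⌋ := h
  have h2 : ((z₁ - z₂ : ℤ):ℝ) * α = ((⌊(z₁:ℝ)*α⌋ - ⌊(z₂:ℝ)*α⌋ : ℤ):ℝ) := by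
    push_cast; linarith
  have hne : (z₁ - z₂ : ℤ) ≠ 0 := sub_ne_zero.2 hz
  exact (hirr.intCast_mul hne).ne_int _ h2

lemma fract_irr_int_mul (hirr : Irrational α) {z : ℤ} (hz : z ≠ 0) :
    Irrational ((z:ℝ)*α) := hirr.intCast_mul hz

/-- decomposition in the basis `(q_K, p_K), (q_{K+1}, p_{K+1})`. -/
lemma cf_decomp (hirr : Irrational α) (h0 : 0 < α) (h2 : α < 1/2) (K : ℕ) (m p : ℤ) :
    ∃ u v : ℤ, m = u * cfQ α K + v * cfQ α (K+1) ∧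
      (-1:ℝ)^K * ((m:ℝ)*α - (p:ℝ)) = (u:ℝ) * et α (K+1) - (v:ℝ) * et α (K+2) := by
  have hdet := cf_det hirr h0 h2 K
  have hs : ((-1:ℤ))^K * ((-1:ℤ))^K = 1 := by rw [← mul_pow]; norm_num
  set u : ℤ := (-1)^K * (m * cfP α (K+1) - p * cfQ α (K+1)) with hudef
  set v : ℤ := (-1)^K * (p * cfQ α K - m * cfP α K) with hvdef
  have hm : m = u * cfQ α K + v * cfQ α (K+1) := by
    rw [hudef, hvdef]
    linear_combination (-((-1:ℤ))^K * m) * hdet + (-m) * hs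
  have hp : p = u * cfP α K + v * cfP α (K+1) := by
    rw [hudef, hvdef]
    linear_combination (-((-1:ℤ))^K * p) * hdet + (-p) * hs
  refine ⟨u, v, hm, ?_⟩
  have e1 : et α (K+1) = (-1:ℝ)^K * ((cfQ α K : ℝ) * α - (cfP α K : ℝ)) := rfl
  have e2 : et α (K+2) = (-1:ℝ)^(K+1) * ((cfQ α (K+1) : ℝ) * α - (cfP α (K+1) : ℝ)) := rfl
  have hm' : (m:ℝ) = (u:ℝ) * (cfQ α K : ℝ) + (v:ℝ) * (cfQ α (K+1) : ℝ) := by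
    exact_mod_cast congrArg (fun z : ℤ => (z:ℝ)) hm
  have hp' : (p:ℝ) = (u:ℝ) * (cfP α K : ℝ) + (v:ℝ) * (cfP α (K+1) : ℝ) := by
    exact_mod_cast congrArg (fun z : ℤ => (z:ℝ)) hp
  rw [e1, e2, pow_succ]
  linear_combination ((-1:ℝ))^K * α * hm' - ((-1:ℝ))^K * hp'

/-- The lattice / best approximation lemma:
if `(-1)^K (m α - p) ∈ (0, et α (K+1)]` then `m = q_K` or `m ≥ q_K + q_{K+1}`. -/
lemma lattice_lemma (hirr : Irrational α) (h0 : 0 < α) (h2 : α < 1/2) (K : ℕ) (m p : ℤ)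
    (hm : 1 ≤ m) (hδ1 : 0 < (-1:ℝ)^K * ((m:ℝ)*α - (p:ℝ)))
    (hδ2 : (-1:ℝ)^K * ((m:ℝ)*α - (p:ℝ)) ≤ et α (K+1)) :
    m = cfQ α K ∨ cfQ α K + cfQ α (K+1) ≤ m := by
  obtain ⟨u, v, hmu, hδ⟩ := cf_decomp hirr h0 h2 K m p
  rw [hδ] at hδ1 hδ2
  have e1 := et_pos hirr h0 h2 (K+1)
  have e2 := et_pos hirr h0 h2 (K+2)
  have q1 := cfQ_pos hirr h0 h2 K
  have q2 := cfQ_pos hirr h0 h2 (K+1)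
  -- u ≥ 1
  have hu : 1 ≤ u := by
    by_contra hu
    push_neg at hu
    have hu' : u ≤ 0 := by omega
    have hv : v ≤ -1 := by
      by_contra hv
      push_neg at hv
      have hv' : 0 ≤ v := by omega
      have : (u:ℝ) * et α (K+1) - (v:ℝ) * et α (K+2) ≤ 0 := by
        have h1 : (u:ℝ) ≤ 0 := by exact_mod_cast hu'
        have h3 : (0:ℝ) ≤ (v:ℝ) := by exact_mod_cast hv'
        nlinarith
      linarith
    have : m ≤ 0 := by
      rw [hmu]; nlinarith
    omega
  -- v ≥ 0
  have hv : 0 ≤ v := by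
    by_contra hv
    push_neg at hv
    have hv' : v ≤ -1 := by omega
    have : et α (K+1) < (u:ℝ) * et α (K+1) - (v:ℝ) * et α (K+2) := by
      have h1 : (1:ℝ) ≤ (u:ℝ) := by exact_mod_cast hu
      have h3 : (v:ℝ) ≤ -1 := by exact_mod_cast hv'
      nlinarith
    linarith
  rcases eq_or_lt_of_le hv with hv0 | hv1
  · -- v = 0 : δ = u et(K+1) ≤ et(K+1) so u = 1, m = q_K
    left
    have : u = 1 := by
      by_contra hu2
      have hu2' : 2 ≤ u := by omega
      have : (2:ℝ) ≤ (u:ℝ) := by exact_mod_cast hu2'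
      rw [← hv0] at hδ2
      push_cast at hδ2
      nlinarith
    rw [hmu, this, ← hv0]; ring
  · right
    have hv1' : 1 ≤ v := hv1
    rw [hmu]
    nlinarith

section Classify

variable {α : ℝ}

lemma fract_q_eq (hirr : Irrational α) (h0 : 0 < α) (h2 : α < 1/2) (J : ℕ) :
    Int.fract ((((-1:ℤ)^J * cfQ α J : ℤ):ℝ)*α) = et α (J+1) := by
  have hval : (((-1:ℤ)^J * cfQ α J : ℤ):ℝ)*α = et α (J+1) + (((-1:ℤ)^J * cfP α J : ℤ):ℝ) := by
    have e1 : et α (J+1) = (-1:ℝ)^J * ((cfQ α J : ℝ) * α - (cfP α J : ℝ)) := rfl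
    rw [e1]; push_cast; ring
  rw [hval, Int.fract_add_intCast]
  exact Int.fract_eq_self.2 ⟨le_of_lt (et_pos hirr h0 h2 (J+1)), et_lt_one hirr h0 h2 J⟩

set_option maxHeartbeats 2000000 in
/-- One-sided records are continuants. -/
lemma rec_classify (hirr : Irrational α) (h0 : 0 < α) (h2 : α < 1/2)
    (K₀ : ℕ) (n : ℕ) (hn : 1 ≤ n)
    (hrec : ∀ m : ℕ, 1 ≤ m → m < n →
      Int.fract ((((-1:ℤ)^K₀ : ℤ):ℝ)*((n:ℝ)*α)) < Int.fract ((((-1:ℤ)^K₀ : ℤ):ℝ)*((m:ℝ)*α)))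
    (hbase : Int.fract ((((-1:ℤ)^K₀ : ℤ):ℝ)*((n:ℝ)*α)) < et α (K₀+1))
    (hK0q : (n:ℤ) ≠ cfQ α K₀) :
    ∃ k : ℕ, 2 ≤ k ∧ ∃ l : ℤ, 1 ≤ l ∧ l ≤ cfA α k ∧
      (n:ℤ) = l * cfQ α (k-1) + cfQ α (k-2) := by
  classical
  have hezn : ∀ m : ℕ, ((((-1:ℤ)^K₀ : ℤ):ℝ))*((m:ℝ)*α) = ((((-1:ℤ)^K₀ * m : ℤ)):ℝ)*α := by
    intro m; push_cast; ring
  set δ : ℝ := Int.fract ((((-1:ℤ)^K₀ : ℤ):ℝ)*((n:ℝ)*α)) with hδdef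
  have heznz : ((-1:ℤ)^K₀) ≠ 0 := pow_ne_zero _ (by norm_num)
  have hδpos : 0 < δ := by
    rw [hδdef, hezn]
    exact fract_pos_irr (hirr.intCast_mul (mul_ne_zero heznz (Int.natCast_ne_zero.2 (by omega))))
  have hδlt1 : δ < 1 := Int.fract_lt_one _
  clear_value δ
  have hex : ∃ j : ℕ, et α (K₀ + 2*j + 1) < δ := by
    obtain ⟨j, hj⟩ := et_decay hirr h0 h2 δ hδpos (K₀+1)
    exact ⟨j, by rw [show K₀ + 2*j + 1 = K₀ + 1 + 2*j by ring]; exact hj⟩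
  obtain ⟨j, hjP, hjmin⟩ : ∃ j, (et α (K₀ + 2*j + 1) < δ) ∧
      ∀ i, i < j → ¬(et α (K₀ + 2*i + 1) < δ) :=
    ⟨Nat.find hex, Nat.find_spec hex, fun i hi => Nat.find_min hex hi⟩
  have hj0 : j ≠ 0 := by
    intro h
    rw [h] at hjP
    simp only [Nat.mul_zero, Nat.add_zero] at hjP
    linarith
  obtain ⟨j', rfl⟩ : ∃ j'', j = j'' + 1 := ⟨j - 1, by omega⟩
  set K := K₀ + 2*j' with hKdef
  have hparK : ((-1:ℤ)^K) = (-1:ℤ)^K₀ := by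
    rw [hKdef, pow_add, pow_mul]; norm_num
  have hδle : δ ≤ et α (K+1) := by
    have h := hjmin j' (by omega)
    push_neg at h
    rwa [show K₀ + 2*j' + 1 = K + 1 from rfl] at h
  have hδgt : et α (K+3) < δ := by
    have h : K₀ + 2*(j'+1) + 1 = K + 3 := by rw [hKdef]; ring
    rw [← h]; exact hjP
  have hfq : ∀ J : ℕ, ((-1:ℤ)^J) = (-1:ℤ)^K₀ →
      Int.fract ((((-1:ℤ)^K₀ * cfQ α J : ℤ):ℝ)*α) = et α (J+1) := by
    intro J hJ
    rw [← hJ]; exact fract_q_eq hirr h0 h2 J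
  have hnq : ∀ J : ℕ, ((-1:ℤ)^J) = (-1:ℤ)^K₀ → (n:ℤ) = cfQ α J → δ = et α (J+1) := by
    intro J hJ hq
    rw [hδdef, hezn, show ((-1:ℤ)^K₀ * n : ℤ) = ((-1:ℤ)^K₀ * cfQ α J : ℤ) by rw [hq]]
    exact hfq J hJ
  by_cases heq : δ = et α (K+1)
  · -- n = q_K
    have hnqK : (n:ℤ) = cfQ α K := by
      by_contra hne
      have h1 : Int.fract ((((-1:ℤ)^K₀ * n : ℤ):ℝ)*α) =
          Int.fract ((((-1:ℤ)^K₀ * cfQ α K : ℤ):ℝ)*α) := by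
        rw [← hezn, ← hδdef, heq, hfq K hparK]
      exact fract_ne_fract hirr
        (fun hc => hne (mul_left_cancel₀ heznz hc)) h1
    have hKne : K ≠ K₀ := fun h => hK0q (h ▸ hnqK)
    have hj'pos : 1 ≤ j' := by
      rcases Nat.eq_zero_or_pos j' with h | h
      · exact absurd (by omega : K = K₀) hKne
      · exact h
    have hK2 : 2 ≤ K := by omega
    refine ⟨K, hK2, cfA α K, ?_, le_refl _, ?_⟩
    · have h := cfA_pos hirr h0 h2 (K-1)
      rwa [show K - 1 + 1 = K by omega] at h
    · rw [hnqK, cfQ_rec hirr h0 h2 hK2]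
  · have hδlt : δ < et α (K+1) := lt_of_le_of_ne hδle heq
    set z : ℤ := ⌊(((-1:ℤ)^K₀ : ℤ):ℝ)*((n:ℝ)*α)⌋ with hzdef
    set p : ℤ := (-1:ℤ)^K * z with hpdef
    have hs0 : (((-1:ℤ)^K₀:ℤ):ℝ) * (((-1:ℤ)^K₀:ℤ):ℝ) = 1 := by
      push_cast
      rw [← mul_pow]; norm_num
    have hparR : ((-1:ℝ))^K = (((-1:ℤ)^K₀ : ℤ):ℝ) := by
      rw [← hparK]; push_cast; ring
    have hδz : δ = (((-1:ℤ)^K₀:ℤ):ℝ)*((n:ℝ)*α) - (z:ℝ) := by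
      rw [hδdef, Int.fract, ← hzdef]
    clear_value z
    have hpr : (p:ℝ) = (((-1:ℤ)^K₀:ℤ):ℝ) * (z:ℝ) := by
      rw [hpdef, hparK]; push_cast; ring
    clear_value p
    have hδp : (-1:ℝ)^K * ((n:ℝ)*α - (p:ℝ)) = δ := by
      rw [hδz, hpr, hparR]
      linear_combination (-(z:ℝ)) * hs0
    -- lattice lemma: n = q_K or n ≥ q_K + q_{K+1}
    have hlat := lattice_lemma hirr h0 h2 K (n:ℤ) p (by exact_mod_cast hn)
      (by push_cast; rw [hδp]; exact hδpos) (by push_cast; rw [hδp]; exact hδle)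
    have hbig : cfQ α K + cfQ α (K+1) ≤ (n:ℤ) := by
      rcases hlat with h | h
      · exact absurd (hnq K hparK h) heq
      · exact h
    have hparK2 : ((-1:ℤ)^(K+2)) = (-1:ℤ)^K₀ := by
      rw [pow_add]; simpa using hparK
    have hupper : (n:ℤ) < cfQ α (K+2) := by
      rcases lt_trichotomy ((n:ℤ)) (cfQ α (K+2)) with h | h | h
      · exact h
      · exfalso
        have := hnq (K+2) hparK2 h
        rw [this] at hδgt
        exact lt_irrefl _ hδgt
      · exfalso
        -- n > q_{K+2}: subtract q_{K+2} and contradict the record property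
        have hq2pos := cfQ_pos hirr h0 h2 (K+2)
        set Q2n : ℕ := (cfQ α (K+2)).toNat with hQ2def
        have hQ2 : (Q2n:ℤ) = cfQ α (K+2) := Int.toNat_of_nonneg (by linarith)
        have hQ2lt : Q2n < n := by
          have : (Q2n:ℤ) < (n:ℤ) := by rw [hQ2]; exact h
          exact_mod_cast this
        have hQ2pos' : 1 ≤ Q2n := by
          have : (1:ℤ) ≤ (Q2n:ℤ) := by rw [hQ2]; exact hq2pos
          exact_mod_cast this
        set m' : ℕ := n - Q2n with hm'def
        have hm'1 : 1 ≤ m' := by omega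
        have hm'lt : m' < n := by omega
        have e3 := et_pos hirr h0 h2 (K+3)
        have hwit : Int.fract ((((-1:ℤ)^K₀:ℤ):ℝ)*((m':ℝ)*α)) = δ - et α (K+3) := by
          have hm'cast : (m':ℝ) = (n:ℝ) - ((cfQ α (K+2) : ℤ):ℝ) := by
            rw [← hQ2]
            push_cast [hm'def]
            rw [Nat.cast_sub (le_of_lt hQ2lt)]
          have hetK3 : et α (K+3) = (-1:ℝ)^(K+2) * ((cfQ α (K+2):ℝ)*α - (cfP α (K+2):ℝ)) := rfl
          have hparR2 : ((-1:ℝ))^(K+2) = (((-1:ℤ)^K₀ : ℤ):ℝ) := by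
            rw [← hparK2]; push_cast; ring
          have hval : (((-1:ℤ)^K₀:ℤ):ℝ)*((m':ℝ)*α) =
              (δ - et α (K+3)) + ((z - (-1:ℤ)^K₀ * cfP α (K+2) : ℤ):ℝ) := by
            rw [hm'cast, hδz, hetK3, hparR2]
            push_cast
            ring
          rw [hval, Int.fract_add_intCast]
          exact Int.fract_eq_self.2 ⟨by linarith, by linarith⟩
        have := hrec m' hm'1 hm'lt
        rw [hwit] at this
        linarith
    -- decomposition and final inequalities
    obtain ⟨u, v, hmu, hδeq⟩ := cf_decomp hirr h0 h2 K (n:ℤ) p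
    push_cast at hδeq
    rw [hδp] at hδeq
    have e1 := et_pos hirr h0 h2 (K+1)
    have e2 := et_pos hirr h0 h2 (K+2)
    have q1 := cfQ_pos hirr h0 h2 K
    have q2 := cfQ_pos hirr h0 h2 (K+1)
    have hqq : cfQ α K ≤ cfQ α (K+1) := le_of_lt (cfQ_lt_succ hirr h0 h2 K)
    have hQrec : cfQ α (K+2) = cfA α (K+2) * cfQ α (K+1) + cfQ α K := rfl
    have ha1 : 1 ≤ cfA α (K+2) := cfA_pos hirr h0 h2 (K+1)
    have hagt : (cfA α (K+2) : ℝ) * et α (K+2) < et α (K+1) := et_gt_a_mul hirr h0 h2 (K+1)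
    have hv0 : 0 ≤ v := by
      by_contra hv; push_neg at hv
      have hv' : v ≤ -1 := by omega
      have hu3 : 3 ≤ u := by nlinarith [hbig, hmu, q1, q2, hqq]
      have hur : (3:ℝ) ≤ (u:ℝ) := by exact_mod_cast hu3
      have hvr : (v:ℝ) ≤ -1 := by exact_mod_cast hv'
      nlinarith [hδeq, hδlt, e1, e2]
    have hv1 : 1 ≤ v := by
      rcases eq_or_lt_of_le hv0 with hveq | h
      · exfalso
        have hδu : δ = (u:ℝ) * et α (K+1) := by
          rw [hδeq, ← hveq]; push_cast; ring
        have hu1 : 1 ≤ u := by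
          by_contra hu; push_neg at hu
          have : (u:ℝ) ≤ 0 := by exact_mod_cast Int.lt_add_one_iff.mp hu
          nlinarith [hδpos]
        have : (1:ℝ) ≤ (u:ℝ) := by exact_mod_cast hu1
        nlinarith [hδlt]
      · exact h
    have hu_pos : 1 ≤ u := by
      by_contra hu; push_neg at hu
      have hur : (u:ℝ) ≤ 0 := by exact_mod_cast Int.lt_add_one_iff.mp hu
      have hvr : (1:ℝ) ≤ (v:ℝ) := by exact_mod_cast hv1
      nlinarith [hδpos, hδeq, e1, e2]
    have hva : v ≤ cfA α (K+2) - 1 := by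
      rw [hQrec] at hupper
      rw [hmu] at hupper
      nlinarith [hupper, hu_pos, q1, q2]
    have hu1 : u = 1 := by
      by_contra hu; 
      have hu2 : 2 ≤ u := by omega
      have hur : (2:ℝ) ≤ (u:ℝ) := by exact_mod_cast hu2
      have hvr : (v:ℝ) ≤ (cfA α (K+2):ℝ) - 1 := by exact_mod_cast hva
      nlinarith [hδeq, hδlt, hδpos, e1, e2, hagt]
    refine ⟨K+2, by omega, v, hv1, by omega, ?_⟩
    rw [show K+2-1 = K+1 from rfl, show K+2-2 = K from rfl]
    rw [hmu, hu1]; ring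

end Classify

section Periods

variable {α : ℝ}

lemma irr_nat_mul (hβ : Irrational α) {k : ℕ} (hk : 1 ≤ k) : Irrational ((k:ℝ)*α) :=
  hβ.natCast_mul (by omega)

lemma irr_neg_nat_mul (hβ : Irrational α) {k : ℕ} (hk : 1 ≤ k) : Irrational (-((k:ℝ)*α)) :=
  (irr_nat_mul hβ hk).neg

/-- The key propagation lemma: a period `n` window forces every better (same-side)
approximation `m < n` to also be a period over a longer window. -/
lemma periodize (β : ℝ) (hβ : Irrational β) (i n m : ℕ) (hm : 1 ≤ m) (hmn : m < n)
    (hμ : Int.fract ((m:ℝ)*β) < Int.fract ((n:ℝ)*β))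
    (H : ∀ t : ℕ, i+1 ≤ t → t ≤ i+n+1 → Int.fract ((n:ℝ)*β) < Int.fract (-((t:ℝ)*β))) :
    ∀ t : ℕ, i+1 ≤ t → t + m ≤ i + 2*n + 1 →
      Int.fract ((m:ℝ)*β) < Int.fract (-((t:ℝ)*β)) := by
  intro t ht1 ht2
  rcases le_or_gt t (i+n+1) with hcase | hcase
  · exact lt_trans hμ (H t ht1 hcase)
  · by_contra hcon
    push_neg at hcon
    set ε := Int.fract ((n:ℝ)*β) with hε
    set μ := Int.fract ((m:ℝ)*β) with hμ'
    set b := Int.fract (-((t:ℝ)*β)) with hb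
    have hbpos : 0 < b := fract_pos_irr (irr_neg_nat_mul hβ (by omega))
    have hεlt : ε < 1 := Int.fract_lt_one _
    have hμpos : 0 < μ := fract_pos_irr (irr_nat_mul hβ hm)
    have hnm : Int.fract (((n-m : ℕ):ℝ)*β) = ε - μ := by
      have hc : ((n-m : ℕ):ℝ) = (n:ℝ) - (m:ℝ) := by
        push_cast [Nat.cast_sub (le_of_lt hmn)]; ring
      rw [hc, sub_mul, fract_fract_sub, ← hε, ← hμ']
      exact Int.fract_eq_self.2 ⟨by linarith, by linarith⟩
    set s : ℕ := t + m - n with hs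
    have hs1 : i+1 ≤ s := by omega
    have hs2 : s ≤ i+n+1 := by omega
    have hsval : Int.fract (-((s:ℝ)*β)) = b + (ε - μ) := by
      have hc : -((s:ℝ)*β) = -((t:ℝ)*β) + ((n-m:ℕ):ℝ)*β := by
        have h1 : (s:ℝ) = (t:ℝ) + (m:ℝ) - (n:ℝ) := by
          rw [hs]
          push_cast [Nat.cast_sub (show n ≤ t + m by omega)]
          ring
        have h2 : ((n-m:ℕ):ℝ) = (n:ℝ) - (m:ℝ) := by
          push_cast [Nat.cast_sub (le_of_lt hmn)]; ring
        rw [h1, h2]; ring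
      rw [hc, fract_fract_add, hnm, ← hb]
      exact Int.fract_eq_self.2 ⟨by linarith, by linarith⟩
    have hHs := H s hs1 hs2
    rw [hsval] at hHs
    linarith

/-- one rotation step for `b t = fract (−tα)`. -/
lemma b_succ (hirr : Irrational α) (h0 : 0 < α) (h1 : α < 1) (t : ℕ) (ht : 1 ≤ t) :
    (α < Int.fract (-((t:ℝ)*α)) ∧
      Int.fract (-(((t+1:ℕ):ℝ)*α)) = Int.fract (-((t:ℝ)*α)) - α) ∨
    (Int.fract (-((t:ℝ)*α)) < α ∧
      Int.fract (-(((t+1:ℕ):ℝ)*α)) = Int.fract (-((t:ℝ)*α)) + 1 - α) := by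
  set b := Int.fract (-((t:ℝ)*α)) with hb
  have hbpos : 0 < b := fract_pos_irr (irr_neg_nat_mul hirr ht)
  have hblt : b < 1 := Int.fract_lt_one _
  have hne : b ≠ α := by
    have h1' : -((t:ℝ)*α) = (((-(t:ℤ)):ℤ):ℝ)*α := by push_cast; ring
    have h2' : α = (((1:ℤ)):ℝ)*α := by norm_num
    rw [hb, h1']
    intro hc
    refine fract_ne_fract hirr (show (-(t:ℤ)) ≠ (1:ℤ) by omega) ?_
    rw [hc, ← h2']
    exact (Int.fract_eq_self.2 ⟨le_of_lt h0, h1⟩).symm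
  have hval : Int.fract (-(((t+1:ℕ):ℝ)*α)) = Int.fract (b - α) := by
    have hc : -(((t+1:ℕ):ℝ)*α) = -((t:ℝ)*α) - α := by push_cast; ring
    rw [hc, fract_fract_sub, ← hb, Int.fract_eq_self.2 ⟨le_of_lt h0, h1⟩]
  rcases lt_or_gt_of_ne hne with hlt | hgt
  · right
    refine ⟨hlt, ?_⟩
    rw [hval]
    have h4 : Int.fract (b - α) = Int.fract (b - α + ((1:ℤ):ℝ)) := (Int.fract_add_intCast _ 1).symm
    have h5 : b - α + ((1:ℤ):ℝ) = b + 1 - α := by push_cast; ring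
    rw [h4, h5, Int.fract_eq_self.2 ⟨by linarith, by linarith⟩]
  · left
    refine ⟨hgt, ?_⟩
    rw [hval, Int.fract_eq_self.2 ⟨by linarith, by linarith⟩]

/-- Case I period construction: both `b t` and `b (t+1)` above `fract(mα)` give
the letter biconditional at `t` with shift `m`. -/
lemma letters_of_big (hirr : Irrational α) (h0 : 0 < α) (h1 : α < 1) (t m : ℕ)
    (ht : 1 ≤ t) (hm : 1 ≤ m)
    (hb : Int.fract ((m:ℝ)*α) < Int.fract (-((t:ℝ)*α)))
    (hb1 : Int.fract ((m:ℝ)*α) < Int.fract (-(((t+1:ℕ):ℝ)*α))) :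
    (Int.fract ((t:ℝ)*α) < 1 - α ↔ Int.fract (((t+m:ℕ):ℝ)*α) < 1 - α) := by
  set θ := Int.fract ((m:ℝ)*α) with hθ
  set b := Int.fract (-((t:ℝ)*α)) with hbd
  set x := Int.fract ((t:ℝ)*α) with hx
  have hθpos : 0 < θ := fract_pos_irr (irr_nat_mul hirr hm)
  have hxpos : 0 < x := fract_pos_irr (irr_nat_mul hirr ht)
  have hbx : b = 1 - x := by
    rw [hbd, hx, Int.fract_neg (ne_of_gt (fract_pos_irr (irr_nat_mul hirr ht)))]
  have hval : Int.fract (((t+m:ℕ):ℝ)*α) = x + θ := by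
    have hc : ((t+m:ℕ):ℝ)*α = (t:ℝ)*α + (m:ℝ)*α := by push_cast; ring
    rw [hc, fract_fract_add, ← hx, ← hθ]
    exact Int.fract_eq_self.2 ⟨by linarith, by linarith⟩
  rw [hval]
  constructor
  · intro hxc
    by_contra hcon
    push_neg at hcon
    -- x + θ ≥ 1 - α, x < 1 - α : so b > α and b ≤ α + θ
    have hbα : α < b := by rw [hbx]; linarith
    have hble : b ≤ α + θ := by rw [hbx]; linarith
    rcases b_succ hirr h0 h1 t ht with ⟨_, heq⟩ | ⟨hlt, _⟩
    · rw [heq, ← hbd] at hb1; linarith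
    · rw [← hbd] at hlt; linarith
  · intro h; linarith

/-- Case II period construction. -/
lemma letters_of_small (hirr : Irrational α) (h0 : 0 < α) (h1 : α < 1) (t m : ℕ)
    (ht : 1 ≤ t) (hm : 1 ≤ m)
    (hb : Int.fract (-((t:ℝ)*α)) < Int.fract ((m:ℝ)*α))
    (hb1 : Int.fract (-(((t+1:ℕ):ℝ)*α)) < Int.fract ((m:ℝ)*α)) :
    (Int.fract ((t:ℝ)*α) < 1 - α ↔ Int.fract (((t+m:ℕ):ℝ)*α) < 1 - α) := by
  set θ := Int.fract ((m:ℝ)*α) with hθ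
  set b := Int.fract (-((t:ℝ)*α)) with hbd
  set x := Int.fract ((t:ℝ)*α) with hx
  have hθlt : θ < 1 := Int.fract_lt_one _
  have hbpos : 0 < b := fract_pos_irr (irr_neg_nat_mul hirr ht)
  have hbx : b = 1 - x := by
    rw [hbd, hx, Int.fract_neg (ne_of_gt (fract_pos_irr (irr_nat_mul hirr ht)))]
  have hval : Int.fract (((t+m:ℕ):ℝ)*α) = θ - b := by
    have hc : ((t+m:ℕ):ℝ)*α = (t:ℝ)*α + (m:ℝ)*α := by push_cast; ring
    rw [hc, fract_fract_add, ← hx, ← hθ]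
    have : Int.fract (x + θ) = Int.fract (x + θ - 1) := by
      rw [show x + θ - 1 = x + θ + (-1 : ℤ) by push_cast; ring, Int.fract_add_intCast]
    rw [this, Int.fract_eq_self.2 ⟨by linarith [hbx], by linarith [hbx]⟩]
    rw [hbx]; ring
  rw [hval]
  have hne : b ≠ α := by
    have h1' : -((t:ℝ)*α) = (((-(t:ℤ)):ℤ):ℝ)*α := by push_cast; ring
    rw [hbd, h1']
    intro hc
    refine fract_ne_fract hirr (show (-(t:ℤ)) ≠ (1:ℤ) by omega) ?_
    rw [hc]
    rw [show (((1:ℤ)):ℝ)*α = α by norm_num]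
    exact (Int.fract_eq_self.2 ⟨le_of_lt h0, h1⟩).symm
  rcases lt_or_gt_of_ne hne with hlt | hgt
  · -- b < α : both sides false
    rcases b_succ hirr h0 h1 t ht with ⟨hgt', _⟩ | ⟨_, heq⟩
    · rw [← hbd] at hgt'; linarith
    · rw [heq, ← hbd] at hb1
      constructor
      · intro h; rw [hbx] at hlt; linarith
      · intro h; linarith
  · -- b > α : both sides true
    rw [hbx] at hgt
    constructor
    · intro _; linarith [hθlt, hbx]
    · intro _; linarith

/-- dichotomy propagation step. -/
lemma step_dichot (hirr : Irrational α) (h0 : 0 < α) (h2 : α < 1/2) (t n : ℕ)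
    (ht : 1 ≤ t) (hn : 1 ≤ n)
    (hB : (Int.fract ((t:ℝ)*α) < 1 - α ↔ Int.fract (((t+n:ℕ):ℝ)*α) < 1 - α)) :
    (Int.fract ((n:ℝ)*α) < Int.fract (-((t:ℝ)*α)) ↔
      Int.fract ((n:ℝ)*α) < Int.fract (-(((t+1:ℕ):ℝ)*α))) := by
  have h1 : α < 1 := by linarith
  set ε := Int.fract ((n:ℝ)*α) with hε
  set b := Int.fract (-((t:ℝ)*α)) with hbd
  set b' := Int.fract (-(((t+1:ℕ):ℝ)*α)) with hbd'
  set x := Int.fract ((t:ℝ)*α) with hx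
  have hεpos : 0 < ε := fract_pos_irr (irr_nat_mul hirr hn)
  have hεlt : ε < 1 := Int.fract_lt_one _
  have hxpos : 0 < x := fract_pos_irr (irr_nat_mul hirr ht)
  have hbpos : 0 < b := fract_pos_irr (irr_neg_nat_mul hirr ht)
  have hbx : b = 1 - x := by
    rw [hbd, hx, Int.fract_neg (ne_of_gt (fract_pos_irr (irr_nat_mul hirr ht)))]
  have hbne : b ≠ ε := by
    rw [hbd, hε]
    have hc1 : -((t:ℝ)*α) = (((-(t:ℤ)):ℤ):ℝ)*α := by push_cast; ring
    have hc2 : ((n:ℝ))*α = (((n:ℤ)):ℝ)*α := by push_cast; ring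
    rw [hc1, hc2]
    exact fract_ne_fract hirr (by omega)
  have hbne' : b' ≠ ε := by
    rw [hbd', hε]
    have hc1 : -(((t+1:ℕ):ℝ)*α) = (((-(t+1:ℤ)):ℤ):ℝ)*α := by push_cast; ring
    have hc2 : ((n:ℝ))*α = (((n:ℤ)):ℝ)*α := by push_cast; ring
    rw [hc1, hc2]
    exact fract_ne_fract hirr (by omega)
  have imp1 : ε < b → ε < b' := by
    intro hbt
    by_contra hcon
    push_neg at hcon
    have hcon' : b' < ε := lt_of_le_of_ne hcon hbne'
    have hval : Int.fract (((t+n:ℕ):ℝ)*α) = x + ε := by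
      have hc : ((t+n:ℕ):ℝ)*α = (t:ℝ)*α + (n:ℝ)*α := by push_cast; ring
      rw [hc, fract_fract_add, ← hx, ← hε]
      exact Int.fract_eq_self.2 ⟨by linarith, by linarith [hbx]⟩
    rcases b_succ hirr h0 h1 t ht with ⟨hα, heq⟩ | ⟨hα, heq⟩
    · rw [← hbd] at heq hα
      rw [← hbd'] at heq
      -- b' = b - α < ε so b < ε + α ; but x < c and hB gives x + ε < c i.e. b > ε + α
      have hxc : x < 1 - α := by rw [hbx] at hα; linarith
      have := hB.mp hxc
      rw [hval] at this
      linarith [heq, hcon', hbx]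
    · rw [← hbd] at heq hα
      rw [← hbd'] at heq
      -- b < α, b' = b + 1 - α < ε gives ε > 1 - α ; with b > ε : α > 1/2 contra
      have : (1:ℝ) - α < ε := by linarith
      linarith [hbt, hα]
  have imp2 : b < ε → b' < ε := by
    intro hbt
    by_contra hcon
    push_neg at hcon
    have hcon' : ε < b' := lt_of_le_of_ne (le_of_lt (lt_of_le_of_ne hcon (Ne.symm hbne'))) (Ne.symm hbne')
    rcases b_succ hirr h0 h1 t ht with ⟨hα, heq⟩ | ⟨hα, heq⟩
    · rw [← hbd] at heq hα
      rw [← hbd'] at heq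
      linarith
    · rw [← hbd] at heq hα
      rw [← hbd'] at heq
      -- b < α, b' = b + 1 - α > ε ⟹ b > ε - 1 + α ⟹ fract((t+n)α) = ε - b < 1 - α
      have hval : Int.fract (((t+n:ℕ):ℝ)*α) = ε - b := by
        have hc : ((t+n:ℕ):ℝ)*α = (t:ℝ)*α + (n:ℝ)*α := by push_cast; ring
        rw [hc, fract_fract_add, ← hx, ← hε]
        have h3 : Int.fract (x + ε) = Int.fract (x + ε - 1) := by
          rw [show x + ε - 1 = x + ε + (-1 : ℤ) by push_cast; ring, Int.fract_add_intCast]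
        rw [h3, Int.fract_eq_self.2 ⟨by linarith [hbx, hbt], by linarith [hbx, hbpos, hεlt]⟩]
        rw [hbx]; ring
      have hrhs : Int.fract (((t+n:ℕ):ℝ)*α) < 1 - α := by
        rw [hval]; linarith
      have := hB.mpr hrhs
      rw [hbx] at hα; linarith
  constructor
  · exact imp1
  · intro h
    by_contra hcon
    push_neg at hcon
    exact absurd (imp2 (lt_of_le_of_ne hcon hbne)) (by linarith)

end Periods

section Words

lemma flatten_replicate (v : ℕ → ℕ) (g : ℕ) : ∀ K : ℕ,
    (List.replicate K ((List.range g).map v)).flatten =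
      (List.range (K*g)).map (fun j => v (j % g)) := by
  intro K
  induction K with
  | zero => simp
  | succ c ih =>
      rw [List.replicate_succ, List.flatten_cons, ih]
      rw [show (c+1)*g = g + c*g by ring, List.range_add, List.map_append]
      congr 1
      · apply List.map_congr_left
        intro j hj
        rw [List.mem_range] at hj
        rw [Nat.mod_eq_of_lt hj]
      · rw [List.map_map]
        apply List.map_congr_left
        intro j hj
        simp only [Function.comp]
        rw [Nat.add_mod_left]

lemma power_of_periods (f : ℕ → ℕ) (n m : ℕ) (hm : 1 ≤ m) (hmn : m < n)
    (hpn : ∀ j, j < n → f j = f (j + n))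
    (hpm : ∀ j, j + m < 2*n → f j = f (j + m)) :
    ∃ (u : List ℕ) (K : ℕ), 2 ≤ K ∧ (List.range n).map f = (List.replicate K u).flatten := by
  have hn0 : 0 < n := by omega
  have hcyc : ∀ r, r < n → f r = f ((r + m) % n) := by
    intro r hr
    rcases lt_or_ge (r+m) n with h | h
    · rw [Nat.mod_eq_of_lt h]
      exact hpm r (by omega)
    · have h1 : (r+m) % n = r+m-n := by
        rw [Nat.mod_eq_sub_mod h, Nat.mod_eq_of_lt (by omega)]
      rw [h1]
      have h2 := hpm r (by omega)
      have h3 := hpn (r+m-n) (by omega)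
      rw [show r+m-n+n = r+m by omega] at h3
      rw [h2, ← h3]
  have hiter : ∀ c r, r < n → f r = f ((r + c*m) % n) := by
    intro c
    induction c with
    | zero => intro r hr; simp [Nat.mod_eq_of_lt hr]
    | succ c ih =>
        intro r hr
        have h1 := ih r hr
        have h2 := hcyc ((r + c*m) % n) (Nat.mod_lt _ hn0)
        have h4 : ((r + c*m) % n + m) % n = (r + (c+1)*m) % n := by
          have h5 := (Nat.mod_modEq (r + c*m) n).add_right m
          rw [show r + (c+1)*m = r + c*m + m by ring]
          exact h5
        rw [h1, h2, h4]
  set g := Nat.gcd m n with hg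
  have hg1 : 1 ≤ g := Nat.gcd_pos_of_pos_left n hm
  have hgdvd : g ∣ n := Nat.gcd_dvd_right m n
  have hgm : g ≤ m := Nat.le_of_dvd hm (Nat.gcd_dvd_left m n)
  have hbez : ∃ c : ℕ, (c*m) % n = g % n := by
    have hAB : (g:ℤ) = m * Nat.gcdA m n + n * Nat.gcdB m n := Nat.gcd_eq_gcd_ab m n
    set A := Nat.gcdA m n with hA
    set B := Nat.gcdB m n with hB
    refine ⟨(A % (n:ℤ)).toNat, ?_⟩
    have hnz : (n:ℤ) ≠ 0 := by positivity
    have hA0 : 0 ≤ A % (n:ℤ) := Int.emod_nonneg A hnz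
    have hcast : (((A % (n:ℤ)).toNat : ℕ) : ℤ) = A % n := Int.toNat_of_nonneg hA0
    have hz : ((((A % (n:ℤ)).toNat * m : ℕ)) : ℤ) % n = ((g:ℕ):ℤ) % n := by
      push_cast
      rw [hcast]
      have h5 : (A % (n:ℤ)) % n = A % n := Int.emod_emod_of_dvd A dvd_rfl
      have h6 : (A % (n:ℤ)) * m ≡ A * m [ZMOD (n:ℤ)] := Int.ModEq.mul_right m h5
      have h7 : (A * (m:ℤ)) % n = ((g:ℤ) - n * B) % n := by
        rw [show A * (m:ℤ) = (g:ℤ) - n * B by linarith [hAB]]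
      have h8 : ((g:ℤ) - n * B) % n = (g:ℤ) % n := by
        rw [sub_eq_add_neg, show -(n*B : ℤ) = n * (-B) by ring]
        exact Int.add_mul_emod_self_left ..
      calc (A % (n:ℤ)) * m % n = (A * m) % n := h6
        _ = (g:ℤ) % n := by rw [h7, h8]
    exact_mod_cast hz
  obtain ⟨c, hc⟩ := hbez
  have hgmod : g % n = g := Nat.mod_eq_of_lt (by omega)
  have hshift : ∀ r, r < n → f r = f ((r + g) % n) := by
    intro r hr
    have h1 := hiter c r hr
    have h2 : (r + c*m) % n = (r + g) % n := by
      have h3 : c*m ≡ g [MOD n] := by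
        show (c*m) % n = g % n
        exact hc
      exact Nat.ModEq.add_left r h3
    rw [h1, h2]
  have hmod : ∀ r, r < n → f r = f (r % g) := by
    intro r
    induction r using Nat.strong_induction_on with
    | _ r ih =>
      intro hr
      rcases lt_or_ge r g with h | h
      · rw [Nat.mod_eq_of_lt h]
      · have h1 := hshift (r - g) (by omega)
        rw [show r - g + g = r by omega, Nat.mod_eq_of_lt hr] at h1
        have h2 := ih (r - g) (by omega) (by omega)
        have h3 : (r - g) % g = r % g := by
          conv_rhs => rw [show r = (r - g) + g by omega]
          rw [Nat.add_mod_right]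
        rw [← h1, h2, h3]
  have hKg : n / g * g = n := Nat.div_mul_cancel hgdvd
  refine ⟨(List.range g).map f, n / g, ?_, ?_⟩
  · by_contra hK
    push_neg at hK
    have hdm : g * (n/g) = n := Nat.mul_div_cancel' hgdvd
    have h5 : n ≤ g := by
      calc n = g * (n/g) := hdm.symm
        _ ≤ g * 1 := Nat.mul_le_mul_left g (by omega)
        _ = g := by ring
    omega
  · rw [flatten_replicate, hKg]
    apply List.map_congr_left
    intro j hj
    rw [List.mem_range] at hj
    exact hmod j hj

end Words

section CaseTwo

variable {α : ℝ}

lemma fract_neg_nat (hirr : Irrational α) {k : ℕ} (hk : 1 ≤ k) :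
    Int.fract (-((k:ℝ)*α)) = 1 - Int.fract ((k:ℝ)*α) :=
  Int.fract_neg (ne_of_gt (fract_pos_irr (irr_nat_mul hirr hk)))

lemma caseII_large (hirr : Irrational α) (h0 : 0 < α) (h2 : α < 1/2) (i n : ℕ) (hn : 1 ≤ n)
    (H : ∀ t : ℕ, i+1 ≤ t → t ≤ i+n+1 → Int.fract (-((t:ℝ)*α)) < Int.fract ((n:ℝ)*α)) :
    1 < ((n:ℝ)+1)*α := by
  by_contra hcon
  push_neg at hcon
  have hne1 : ((n:ℝ)+1)*α ≠ 1 := by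
    have : Irrational (((n+1:ℕ):ℝ)*α) := irr_nat_mul hirr (by omega)
    intro h
    apply this.ne_one
    rw [show ((n+1:ℕ):ℝ) = (n:ℝ)+1 by push_cast; ring, h]
  have hlt1 : ((n:ℝ)+1)*α < 1 := lt_of_le_of_ne hcon hne1
  have hnα : (n:ℝ)*α < 1 - α := by nlinarith
  have hε : Int.fract ((n:ℝ)*α) = (n:ℝ)*α :=
    Int.fract_eq_self.2 ⟨by positivity, by linarith⟩
  have Ha : ∀ t : ℕ, i+1 ≤ t → t ≤ i+n+1 → 1 - (n:ℝ)*α < Int.fract ((t:ℝ)*α) := by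
    intro t h1 h2'
    have hb := H t h1 h2'
    rw [hε, fract_neg_nat hirr (show 1 ≤ t by omega)] at hb
    linarith
  have key : ∀ d : ℕ, d ≤ n →
      Int.fract (((i+1+d:ℕ):ℝ)*α) = Int.fract (((i+1:ℕ):ℝ)*α) + d*α := by
    intro d hd
    induction d with
    | zero => simp
    | succ c ih =>
        have ihc := ih (by omega)
        have hstep : Int.fract (((i+1+(c+1):ℕ):ℝ)*α) =
            Int.fract (Int.fract (((i+1+c:ℕ):ℝ)*α) + α) := by
          have hc : ((i+1+(c+1):ℕ):ℝ)*α = ((i+1+c:ℕ):ℝ)*α + α := by push_cast; ring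
          rw [hc, fract_fract_add, Int.fract_eq_self.2 ⟨h0.le, by linarith⟩]
        set v := Int.fract (((i+1+c:ℕ):ℝ)*α) with hv
        have hv1 : v < 1 := Int.fract_lt_one _
        have hv0 : 0 ≤ v := Int.fract_nonneg _
        rcases lt_or_ge (v + α) 1 with hcase | hcase
        · rw [hstep, Int.fract_eq_self.2 ⟨by positivity, hcase⟩, ihc]
          push_cast; ring
        · exfalso
          have hwrap0 : Int.fract (v + α) = v + α - 1 := by
            have he : Int.fract (v + α) = Int.fract ((v + α - 1) + ((1:ℤ):ℝ)) := by norm_num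
            rw [he, Int.fract_add_intCast]
            exact Int.fract_eq_self.2 ⟨by linarith, by linarith⟩
          have hwrap : Int.fract (((i+1+(c+1):ℕ):ℝ)*α) = v + α - 1 := by
            rw [hstep, hwrap0]
          have hHa := Ha (i+1+(c+1)) (by omega) (by omega)
          rw [hwrap] at hHa
          linarith
  have h1 := key n (le_refl n)
  have h2' := Ha (i+1) (le_refl _) (by omega)
  have h3 := Int.fract_lt_one (((i+1+n:ℕ):ℝ)*α)
  rw [h1] at h3
  linarith

lemma a1_le_of (hirr : Irrational α) (h0 : 0 < α) (h2 : α < 1/2) (n : ℕ)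
    (h : 1 < ((n:ℝ)+1)*α) : cfA α 1 ≤ (n:ℤ) := by
  have hfl : (cfA α 1 : ℝ) ≤ α⁻¹ := by
    rw [cfA, gauss_one h0 (by linarith)]
    exact Int.floor_le _
  have hinv : α⁻¹ < (n:ℝ)+1 := by
    rw [inv_lt_iff_one_lt_mul₀ h0]
    linarith [h]
  have : (cfA α 1 : ℝ) < (n:ℝ)+1 := lt_of_le_of_lt hfl hinv
  have h4 : (cfA α 1 : ℝ) < ((n:ℤ):ℝ)+1 := by push_cast; push_cast at this; linarith
  have h5 : cfA α 1 < (n:ℤ)+1 := by exact_mod_cast h4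
  omega

lemma et_two : et α 2 = 1 - (cfA α 1 : ℝ)*α := by
  show (-1:ℝ)^1 * ((cfQ α 1 : ℝ) * α - (cfP α 1 : ℝ)) = _
  have hq : cfQ α 1 = cfA α 1 := rfl
  have hp : cfP α 1 = 1 := rfl
  rw [hq, hp]; push_cast; ring

end CaseTwo

section Final

variable {α : ℝ}

lemma sturmian_eq_iff (α : ℝ) (x y : ℕ) :
    sturmianLetter α x = sturmianLetter α y ↔
      (Int.fract (((x:ℝ)+1)*α) < 1-α ↔ Int.fract (((y:ℝ)+1)*α) < 1-α) := by
  unfold sturmianLetter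
  split_ifs with h1 h2 h2 <;> simp [h1, h2]

lemma output_process (hα : Irrational α) (h0 : 0 < α) (h2 : α < 1/2) (n : ℕ)
    (h : ∃ k : ℕ, 2 ≤ k ∧ ∃ l : ℤ, 1 ≤ l ∧ l ≤ cfA α k ∧
      (n:ℤ) = l * cfQ α (k-1) + cfQ α (k-2)) :
    (∃ k : ℕ, (n:ℤ) = cfQ α k) ∨
      (∃ k : ℕ, 2 ≤ k ∧ ∃ l : ℤ, 0 < l ∧ l < cfA α k ∧
        (n:ℤ) = l * cfQ α (k-1) + cfQ α (k-2)) := by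
  obtain ⟨k, hk2, l, hl1, hl2, heq⟩ := h
  rcases eq_or_lt_of_le hl2 with hle | hlt
  · left
    refine ⟨k, ?_⟩
    rw [heq, hle]
    exact (cfQ_rec hα h0 h2 hk2).symm
  · right
    exact ⟨k, hk2, l, by omega, hlt, heq⟩

theorem square_length_convergent' (hα : Irrational α) (h0 : 0 < α) (h2 : α < 1 / 2)
    (w : List ℕ) (hw : w ≠ []) (hprim : PrimitiveWord w) (hsq : InLang α (w ++ w)) :
    (∃ k : ℕ, (w.length : ℤ) = cfQ α k) ∨
      (∃ k : ℕ, 2 ≤ k ∧ ∃ l : ℤ, 0 < l ∧ l < cfA α k ∧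
        (w.length : ℤ) = l * cfQ α (k - 1) + cfQ α (k - 2)) := by
  obtain ⟨i, hi⟩ := hsq
  set n := w.length with hn
  have hn1 : 1 ≤ n := by
    rw [hn]; exact List.length_pos_iff.2 hw
  have hlen : (w ++ w).length = n + n := by rw [List.length_append]
  rw [hlen, List.range_add, List.map_append] at hi
  have hlen1 : w.length = ((List.range n).map (fun j => sturmianLetter α (i+j))).length := by
    simp [hn]
  obtain ⟨hw1, hw2⟩ := List.append_inj hi hlen1
  rw [List.map_map] at hw2
  -- period n of the letters
  have hpn : ∀ j, j < n → sturmianLetter α (i+j) = sturmianLetter α (i+(j+n)) := by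
    intro j hj
    have hjw : j < w.length := by omega
    have e1 : w[j]'hjw = sturmianLetter α (i+j) := by
      rw [List.getElem_of_eq hw1 hjw]
      simp [hj]
    have e2 : w[j]'hjw = sturmianLetter α (i+(n+j)) := by
      rw [List.getElem_of_eq hw2 hjw]
      simp [hj, Function.comp]
    rw [e1] at e2
    rw [show i+(j+n) = i+(n+j) by omega]
    exact e2
  -- letter biconditionals in fract form
  have hBn : ∀ t : ℕ, i+1 ≤ t → t ≤ i+n →
      (Int.fract ((t:ℝ)*α) < 1-α ↔ Int.fract (((t+n:ℕ):ℝ)*α) < 1-α) := by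
    intro t ht1 ht2
    have hj : t - (i+1) < n := by omega
    have h1 := hpn (t-(i+1)) hj
    rw [sturmian_eq_iff] at h1
    have e1 : ((i + (t-(i+1)) : ℕ):ℝ) + 1 = ((t:ℕ):ℝ) := by
      have h : (i + (t-(i+1))) + 1 = t := by omega
      exact_mod_cast congrArg (fun k : ℕ => (k:ℝ)) h
    have e2 : ((i + ((t-(i+1)) + n) : ℕ):ℝ) + 1 = ((t+n:ℕ):ℝ) := by
      have h : (i + ((t-(i+1)) + n)) + 1 = t + n := by omega
      exact_mod_cast congrArg (fun k : ℕ => (k:ℝ)) h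
    rw [e1, e2] at h1
    exact h1
  -- dichotomy
  have hdich : (∀ t : ℕ, i+1 ≤ t → t ≤ i+n+1 →
        Int.fract ((n:ℝ)*α) < Int.fract (-((t:ℝ)*α)))
      ∨ (∀ t : ℕ, i+1 ≤ t → t ≤ i+n+1 →
        Int.fract (-((t:ℝ)*α)) < Int.fract ((n:ℝ)*α)) := by
    have hkey : ∀ d : ℕ, d ≤ n →
        (Int.fract ((n:ℝ)*α) < Int.fract (-(((i+1+d:ℕ):ℝ)*α)) ↔
         Int.fract ((n:ℝ)*α) < Int.fract (-(((i+1:ℕ):ℝ)*α))) := by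
      intro d hd
      induction d with
      | zero => norm_num
      | succ c ih =>
          have h1 := step_dichot hα h0 h2 (i+1+c) n (by omega) hn1
            (hBn (i+1+c) (by omega) (by omega))
          rw [show (i+1+c)+1 = i+1+(c+1) by omega] at h1
          exact h1.symm.trans (ih (by omega))
    have hne : ∀ t : ℕ, 1 ≤ t → Int.fract (-((t:ℝ)*α)) ≠ Int.fract ((n:ℝ)*α) := by
      intro t ht
      have hc1 : -((t:ℝ)*α) = (((-(t:ℤ)):ℤ):ℝ)*α := by push_cast; ring
      have hc2 : ((n:ℝ))*α = (((n:ℤ)):ℝ)*α := by push_cast; ring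
      rw [hc1, hc2]
      exact fract_ne_fract hα (by omega)
    rcases lt_or_gt_of_ne (hne (i+1) (by omega)) with hlt | hgt
    · right
      intro t ht1 ht2
      have hd := hkey (t - (i+1)) (by omega)
      rw [show i+1+(t-(i+1)) = t by omega] at hd
      have h3 : ¬ (Int.fract ((n:ℝ)*α) < Int.fract (-((t:ℝ)*α))) := fun hcon =>
        absurd (hd.mp hcon) (by linarith)
      rcases lt_or_gt_of_ne (hne t (by omega)) with h | h
      · exact h
      · exact absurd h h3
    · left
      intro t ht1 ht2
      have hd := hkey (t - (i+1)) (by omega)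
      rw [show i+1+(t-(i+1)) = t by omega] at hd
      exact hd.mpr hgt
  rcases hdich with hI | hII
  · -- Case I : all b t > ε, above-records
    by_cases hrec : ∀ m : ℕ, 1 ≤ m → m < n →
        Int.fract ((n:ℝ)*α) < Int.fract ((m:ℝ)*α)
    · rcases Nat.lt_or_ge n 2 with hsmall | hnge2
      · left
        refine ⟨0, ?_⟩
        have h : n = 1 := by omega
        rw [h]
        rfl
      · have hconv : ∀ k : ℕ, Int.fract ((((-1:ℤ)^0:ℤ):ℝ)*((k:ℝ)*α)) = Int.fract ((k:ℝ)*α) := by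
          intro k; norm_num
        have hcl := rec_classify hα h0 h2 0 n hn1
          (by intro m hm1 hmn; rw [hconv, hconv]; exact hrec m hm1 hmn)
          (by
            rw [hconv, et_one]
            have h := hrec 1 (by omega) (by omega)
            have h1 : Int.fract (((1:ℕ):ℝ)*α) = α := by
              rw [show ((1:ℕ):ℝ)*α = α by norm_num]
              exact Int.fract_eq_self.2 ⟨h0.le, by linarith⟩
            rw [h1] at h
            exact h)
          (by
            have h : cfQ α 0 = 1 := rfl
            rw [h]
            exact_mod_cast (by omega : (n:ℤ) ≠ 1))
        exact output_process hα h0 h2 n hcl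
    · push_neg at hrec
      obtain ⟨m, hm1, hmn, hmle⟩ := hrec
      have hmne : Int.fract ((m:ℝ)*α) ≠ Int.fract ((n:ℝ)*α) := by
        have hc1 : ((m:ℝ))*α = (((m:ℤ)):ℝ)*α := by push_cast; ring
        have hc2 : ((n:ℝ))*α = (((n:ℤ)):ℝ)*α := by push_cast; ring
        rw [hc1, hc2]
        exact fract_ne_fract hα (by omega)
      have hμ : Int.fract ((m:ℝ)*α) < Int.fract ((n:ℝ)*α) := lt_of_le_of_ne hmle hmne
      have hP := periodize α hα i n m hm1 hmn hμ hI
      have hpm : ∀ j, j + m < 2*n →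
          sturmianLetter α (i+j) = sturmianLetter α (i+(j+m)) := by
        intro j hj
        have hb1 := hP (i+j+1) (by omega) (by omega)
        have hb2 := hP (i+j+1+1) (by omega) (by omega)
        have hiff := letters_of_big hα h0 (by linarith) (i+j+1) m (by omega) hm1 hb1 hb2
        rw [sturmian_eq_iff]
        have e1 : ((i+j:ℕ):ℝ) + 1 = ((i+j+1:ℕ):ℝ) := by push_cast; ring
        have e2 : ((i+(j+m):ℕ):ℝ) + 1 = (((i+j+1)+m:ℕ):ℝ) := by push_cast; ring
        rw [e1, e2]
        exact hiff
      exfalso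
      apply hprim
      obtain ⟨u, K, hK2, hpow⟩ := power_of_periods (fun j => sturmianLetter α (i+j)) n m hm1 hmn
        (by intro j hj; exact hpn j hj) (by intro j hj; exact hpm j hj)
      exact ⟨u, K, hK2, hw1.trans hpow⟩
  · -- Case II : below-records
    by_cases hrec : ∀ m : ℕ, 1 ≤ m → m < n →
        Int.fract (-((n:ℝ)*α)) < Int.fract (-((m:ℝ)*α))
    · -- record; first n ≥ a₁
      have hlarge := caseII_large hα h0 h2 i n hn1 hII
      have ha1n : cfA α 1 ≤ (n:ℤ) := a1_le_of hα h0 h2 n hlarge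
      by_cases hq1 : (n:ℤ) = cfQ α 1
      · exact Or.inl ⟨1, hq1⟩
      · have hq1' : cfQ α 1 = cfA α 1 := rfl
        have ha2 := cfA_one_ge h0 h2
        set A1 : ℕ := (cfA α 1).toNat with hA1def
        have hA1 : (A1:ℤ) = cfA α 1 := Int.toNat_of_nonneg (by omega)
        have hA1n : A1 < n := by
          have h : (A1:ℤ) < (n:ℤ) := by rw [hA1]; omega
          exact_mod_cast h
        have hA1pos : 1 ≤ A1 := by
          have h : (1:ℤ) ≤ (A1:ℤ) := by rw [hA1]; omega
          exact_mod_cast h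
        have hA1α : Int.fract ((A1:ℝ)*α) = (A1:ℝ)*α := by
          refine Int.fract_eq_self.2 ⟨by positivity, ?_⟩
          have hfl : (cfA α 1 : ℝ) ≤ α⁻¹ := by
            rw [cfA, gauss_one h0 (by linarith)]
            exact Int.floor_le _
          have hle1 : (A1:ℝ)*α ≤ 1 := by
            have : (A1:ℝ) = (cfA α 1 : ℝ) := by exact_mod_cast hA1
            rw [this]
            calc (cfA α 1 : ℝ)*α ≤ α⁻¹*α := by nlinarith
              _ = 1 := by field_simp
          have hne1 : (A1:ℝ)*α ≠ 1 := (irr_nat_mul hα hA1pos).ne_one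
          exact lt_of_le_of_ne hle1 hne1
        have hconv : ∀ k : ℕ, Int.fract ((((-1:ℤ)^1:ℤ):ℝ)*((k:ℝ)*α)) =
            Int.fract (-((k:ℝ)*α)) := by
          intro k; norm_num
        have hcl := rec_classify hα h0 h2 1 n hn1
          (by intro m hm1 hmn; rw [hconv, hconv]; exact hrec m hm1 hmn)
          (by
            rw [hconv]
            have h := hrec A1 hA1pos hA1n
            have h1 : Int.fract (-((A1:ℝ)*α)) = 1 - (A1:ℝ)*α := by
              rw [fract_neg_nat hα hA1pos, hA1α]
            rw [h1] at h
            have h2' : et α 2 = 1 - (A1:ℝ)*α := by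
              rw [et_two]
              have : (A1:ℝ) = (cfA α 1 : ℝ) := by exact_mod_cast hA1
              rw [this]
            rw [h2']
            exact h)
          hq1
        exact output_process hα h0 h2 n hcl
    · push_neg at hrec
      obtain ⟨m, hm1, hmn, hmle⟩ := hrec
      have hmne : Int.fract (-((m:ℝ)*α)) ≠ Int.fract (-((n:ℝ)*α)) := by
        have hc1 : -((m:ℝ)*α) = (((-(m:ℤ)):ℤ):ℝ)*α := by push_cast; ring
        have hc2 : -((n:ℝ))*α = (((-(n:ℤ)):ℤ):ℝ)*α := by push_cast; ring
        rw [hc1, show -((n:ℝ)*α) = -((n:ℝ))*α by ring, hc2]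
        exact fract_ne_fract hα (by omega)
      have hμ : Int.fract (-((m:ℝ)*α)) < Int.fract (-((n:ℝ)*α)) := lt_of_le_of_ne hmle hmne
      -- periodize with β = -α
      have hβ : Irrational (-α) := hα.neg
      have hμ' : Int.fract ((m:ℝ)*(-α)) < Int.fract ((n:ℝ)*(-α)) := by
        rw [mul_neg, mul_neg]; exact hμ
      have hH : ∀ t : ℕ, i+1 ≤ t → t ≤ i+n+1 →
          Int.fract ((n:ℝ)*(-α)) < Int.fract (-((t:ℝ)*(-α))) := by
        intro t ht1 ht2
        rw [mul_neg, mul_neg, neg_neg]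
        have h := hII t ht1 ht2
        rw [fract_neg_nat hα (show 1 ≤ t by omega)] at h
        rw [fract_neg_nat hα hn1]
        linarith
      have hP := periodize (-α) hβ i n m hm1 hmn hμ' hH
      have hpm : ∀ j, j + m < 2*n →
          sturmianLetter α (i+j) = sturmianLetter α (i+(j+m)) := by
        intro j hj
        have hb1 := hP (i+j+1) (by omega) (by omega)
        have hb2 := hP (i+j+1+1) (by omega) (by omega)
        rw [mul_neg, mul_neg, neg_neg] at hb1 hb2
        -- fract(−(mα)) < fract(tα) : convert to b t < θ
        have hb1' : Int.fract (-(((i+j+1:ℕ):ℝ)*α)) < Int.fract ((m:ℝ)*α) := by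
          rw [fract_neg_nat hα (show 1 ≤ m by omega)] at hb1
          rw [fract_neg_nat hα (show 1 ≤ i+j+1 by omega)]
          have := fract_pos_irr (irr_nat_mul hα (show 1 ≤ i+j+1 by omega))
          linarith
        have hb2' : Int.fract (-(((i+j+1+1:ℕ):ℝ)*α)) < Int.fract ((m:ℝ)*α) := by
          rw [fract_neg_nat hα (show 1 ≤ m by omega)] at hb2
          rw [fract_neg_nat hα (show 1 ≤ i+j+1+1 by omega)]
          have := fract_pos_irr (irr_nat_mul hα (show 1 ≤ i+j+1+1 by omega))
          linarith
        have hiff := letters_of_small hα h0 (by linarith) (i+j+1) m (by omega) hm1 hb1' hb2'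
        rw [sturmian_eq_iff]
        have e1 : ((i+j:ℕ):ℝ) + 1 = ((i+j+1:ℕ):ℝ) := by push_cast; ring
        have e2 : ((i+(j+m):ℕ):ℝ) + 1 = (((i+j+1)+m:ℕ):ℝ) := by push_cast; ring
        rw [e1, e2]
        exact hiff
      exfalso
      apply hprim
      obtain ⟨u, K, hK2, hpow⟩ := power_of_periods (fun j => sturmianLetter α (i+j)) n m hm1 hmn
        (by intro j hj; exact hpn j hj) (by intro j hj; exact hpm j hj)
      exact ⟨u, K, hK2, hw1.trans hpow⟩

end Final


/-- If `w` is primitive and `w²` is a factor of a Sturmian word of slope `α`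
(`α ∈ (0, 1/2)` irrational), then `|w|` is the denominator `q_k` of a convergent or the
denominator `q_{k,l} = l q_{k-1} + q_{k-2}` (`k ≥ 2`, `0 < l < a_k`) of a semiconvergent. -/
theorem square_length_convergent (α : ℝ) (hα : Irrational α) (h0 : 0 < α) (h2 : α < 1 / 2)
    (w : List ℕ) (hw : w ≠ []) (hprim : PrimitiveWord w) (hsq : InLang α (w ++ w)) :
    (∃ k : ℕ, (w.length : ℤ) = cfQ α k) ∨
      (∃ k : ℕ, 2 ≤ k ∧ ∃ l : ℤ, 0 < l ∧ l < cfA α k ∧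
        (w.length : ℤ) = l * cfQ α (k - 1) + cfQ α (k - 2)) :=
  square_length_convergent' hα h0 h2 w hw hprim hsq
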